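/- If for every subset S ⊆ V(G) with |S| ≤ k the orbit partition Orb(Aut_S(G)) equals P_S(G), then for any graph H ≅ G and any sequences u_1,…,u_{i+1} in V(G) and v_1,…,v_{i+1} in V(H) of individualized vertices produced by Tinhofer's algorithm with i ≤ k, there exists an isomorphism from G to H mapping u_j to v_j for all j ≤ i+1. (Inductive step: if θ : G → H is an isomorphism with θ(u_j) = v_j for j ≤ i, and u_{i+1}, θ^{-1}(v_{i+1}) lie in the same class of P_S(G) for S = {u_1,…,u_i}, then composing θ with an element β of Aut_S(G) mapping u_{i+1} to θ^{-1}(v_{i+1}) yields the required isomorphism.) -/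

import Mathlib

open scoped Classical

noncomputable section

variable {V W : Type*}

/-- One step of color refinement: the new color of `v` encodes its old color together with
the multiset (as a sorted list) of old colors of its neighbours. -/
noncomputable def refineStep (G : SimpleGraph V) [Fintype V] (c : V → ℕ) : V → ℕ :=
  letI := Classical.decRel G.Adj
  fun v => Encodable.encode (c v, Multiset.sort (Multiset.map c (G.neighborFinset v).val) (· ≤ ·))

/-- `i` iterations of color refinement. -/
noncomputable def refineIter (G : SimpleGraph V) [Fintype V] (c : V → ℕ) (i : ℕ) : V → ℕ :=
  (refineStep G)^[i] c

/-- The stable coloring obtained by running color refinement to stabilization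
(after `|V|` rounds the induced partition is stable). -/
noncomputable def stab (G : SimpleGraph V) [Fintype V] (c : V → ℕ) : V → ℕ :=
  refineIter G c (Fintype.card V)

/-- Individualize the vertex `v`: it gets a fresh color. -/
noncomputable def indiv (c : V → ℕ) (v : V) : V → ℕ :=
  fun u => if u = v then 0 else c u + 1

/-- Individualize the set `S`: each of its vertices gets a fresh distinct color. -/
noncomputable def indivSet [Fintype V] (c : V → ℕ) (S : Set V) : V → ℕ :=
  fun u => if u ∈ S then 2 * ((Fintype.equivFin V) u : ℕ) else 2 * c u + 1

/-- Isomorphism of vertex-colored graphs. -/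
def IsoColored (G : SimpleGraph V) (H : SimpleGraph W) (c : V → ℕ) (d : W → ℕ) : Prop :=
  ∃ σ : V ≃ W, (∀ x y, G.Adj x y ↔ H.Adj (σ x) (σ y)) ∧ ∀ v, d (σ v) = c v

/-- Color-preserving automorphism of the vertex-colored graph `(G, c)`. -/
def IsAut (G : SimpleGraph V) (c : V → ℕ) (σ : V ≃ V) : Prop :=
  (∀ x y, G.Adj x y ↔ G.Adj (σ x) (σ y)) ∧ ∀ v, c (σ v) = c v

/-- The coloring obtained from `c` by refining, then successively individualizing
the vertices in the list and re-refining after each individualization. -/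
noncomputable def runIR (G : SimpleGraph V) [Fintype V] : (V → ℕ) → List V → (V → ℕ)
  | c, [] => stab G c
  | c, v :: l => runIR G (indiv (stab G c) v) l

/-- The two lists of individualized vertices are chosen, at each round, from the same
color class of the current stable colorings. -/
def ValidSeq (G : SimpleGraph V) (H : SimpleGraph W) [Fintype V] [Fintype W] :
    (V → ℕ) → (W → ℕ) → List V → List W → Prop
  | _, _, [], [] => True
  | c, d, u :: us, v :: vs =>
      stab G c u = stab H d v ∧
      ValidSeq G H (indiv (stab G c) u) (indiv (stab H d) v) us vs
  | _, _, _, _ => False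

/-- `G` is `k`-Tinhofer: for every isomorphic colored graph `H`, any `k` rounds of
individualization-and-refinement (with arbitrary valid choices of vertices)
yield isomorphic colored graphs. -/
def kTinhofer (k : ℕ) (G : SimpleGraph V) [Fintype V] (c : V → ℕ) : Prop :=
  ∀ (W' : Type) [Fintype W'] (H : SimpleGraph W') (d : W' → ℕ),
    IsoColored G H c d →
    ∀ (us : List V) (vs : List W'), us.length = k → vs.length = k →
      ValidSeq G H c d us vs → IsoColored G H (runIR G c us) (runIR H d vs)

end

section MyHelpers

variable {V W : Type*}

/-- The multiset of neighbours, with the classical decidability instance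
used in `refineStep`. -/
noncomputable def nbrs (G : SimpleGraph V) [Fintype V] (x : V) : Multiset V :=
  letI := Classical.decRel G.Adj
  (G.neighborFinset x).val

lemma refineStep_def (G : SimpleGraph V) [Fintype V] (a : V → ℕ) (v : V) :
    refineStep G a v =
      Encodable.encode (a v, Multiset.sort (Multiset.map a (nbrs G v)) (· ≤ ·)) := rfl

lemma mem_nbrs (G : SimpleGraph V) [Fintype V] (x w : V) :
    w ∈ nbrs G x ↔ G.Adj x w := by
  unfold nbrs
  letI := Classical.decRel G.Adj
  rw [← SimpleGraph.mem_neighborFinset]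
  exact Iff.rfl

/-- One refinement step: equality of new colors gives equality of old colors and of
neighbour color multisets. -/
lemma refineStep_eq_iff (G : SimpleGraph V) [Fintype V] (a : V → ℕ) (x y : V) :
    refineStep G a x = refineStep G a y ↔
      (a x = a y ∧ Multiset.map a (nbrs G x) = Multiset.map a (nbrs G y)) := by
  rw [refineStep_def, refineStep_def]
  constructor
  · intro h
    have h' := Encodable.encode_injective h
    rw [Prod.ext_iff] at h'
    refine ⟨h'.1, ?_⟩
    have := congrArg (fun l : List ℕ => (l : Multiset ℕ)) h'.2
    simpa [Multiset.sort_eq] using this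
  · rintro ⟨h1, h2⟩
    rw [h1, h2]

lemma refineStep_congr (G : SimpleGraph V) [Fintype V] (a b : V → ℕ)
    (h : ∀ x y, a x = a y → b x = b y) (x y : V)
    (hxy : refineStep G a x = refineStep G a y) :
    refineStep G b x = refineStep G b y := by
  obtain ⟨f, hf⟩ : ∃ f : ℕ → ℕ, ∀ z, b z = f (a z) := by
    refine ⟨fun m => if h' : ∃ z, a z = m then b h'.choose else 0, fun z => ?_⟩
    have hz : ∃ w, a w = a z := ⟨z, rfl⟩
    show b z = if h' : ∃ w, a w = a z then b h'.choose else 0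
    rw [dif_pos hz]
    exact (h _ _ hz.choose_spec).symm
  rw [refineStep_eq_iff] at hxy ⊢
  refine ⟨h _ _ hxy.1, ?_⟩
  have hmm : ∀ s : Multiset V, Multiset.map b s = Multiset.map f (Multiset.map a s) := by
    intro s
    rw [Multiset.map_map]
    exact Multiset.map_congr rfl fun z _ => hf z
  rw [hmm, hmm, hxy.2]

lemma refineIter_congr (G : SimpleGraph V) [Fintype V] (a b : V → ℕ)
    (h : ∀ x y, a x = a y → b x = b y) (n : ℕ) (x y : V)
    (hxy : refineIter G a n x = refineIter G a n y) :
    refineIter G b n x = refineIter G b n y := by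
  induction n generalizing x y with
  | zero => exact h x y hxy
  | succ n ih =>
    unfold refineIter at *
    rw [Function.iterate_succ_apply'] at hxy ⊢
    exact refineStep_congr G _ _ ih x y hxy

lemma refineStep_base (G : SimpleGraph V) [Fintype V] (a : V → ℕ) (x y : V)
    (h : refineStep G a x = refineStep G a y) : a x = a y :=
  ((refineStep_eq_iff G a x y).mp h).1

lemma refineIter_base (G : SimpleGraph V) [Fintype V] (a : V → ℕ) (n : ℕ) (x y : V)
    (h : refineIter G a n x = refineIter G a n y) : a x = a y := by
  induction n generalizing x y with
  | zero => exact h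
  | succ n ih =>
    unfold refineIter at h
    rw [Function.iterate_succ_apply'] at h
    exact ih x y (refineStep_base G _ x y h)

lemma refineStep_iso (G : SimpleGraph V) (H : SimpleGraph W) [Fintype V] [Fintype W]
    (σ : V ≃ W) (hadj : ∀ x y, G.Adj x y ↔ H.Adj (σ x) (σ y))
    (a : V → ℕ) (b : W → ℕ) (hab : ∀ x, b (σ x) = a x) (x : V) :
    refineStep H b (σ x) = refineStep G a x := by
  rw [refineStep_def, refineStep_def]
  have hval : nbrs H (σ x) = Multiset.map σ (nbrs G x) := by
    unfold nbrs
    letI := Classical.decRel G.Adj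
    letI := Classical.decRel H.Adj
    have hN : H.neighborFinset (σ x) = (G.neighborFinset x).map ⟨σ, σ.injective⟩ := by
      ext w
      simp only [SimpleGraph.mem_neighborFinset, Finset.mem_map,
        Function.Embedding.coeFn_mk]
      constructor
      · intro hw
        exact ⟨σ.symm w, (hadj x (σ.symm w)).mpr (by simpa using hw), by simp⟩
      · rintro ⟨z, hz, rfl⟩
        exact (hadj x z).mp hz
    rw [hN, Finset.map_val]
    rfl
  have hmap : Multiset.map b (nbrs H (σ x)) = Multiset.map a (nbrs G x) := by
    rw [hval, Multiset.map_map]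
    exact Multiset.map_congr rfl fun z _ => hab z
  rw [hab x, hmap]

lemma refineIter_iso (G : SimpleGraph V) (H : SimpleGraph W) [Fintype V] [Fintype W]
    (σ : V ≃ W) (hadj : ∀ x y, G.Adj x y ↔ H.Adj (σ x) (σ y))
    (a : V → ℕ) (b : W → ℕ) (hab : ∀ x, b (σ x) = a x) (n : ℕ) (x : V) :
    refineIter H b n (σ x) = refineIter G a n x := by
  induction n generalizing x with
  | zero => exact hab x
  | succ n ih =>
    unfold refineIter at *
    rw [Function.iterate_succ_apply', Function.iterate_succ_apply']
    exact refineStep_iso G H σ hadj _ _ ih x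

lemma stab_iso (G : SimpleGraph V) (H : SimpleGraph W) [Fintype V] [Fintype W]
    (σ : V ≃ W) (hadj : ∀ x y, G.Adj x y ↔ H.Adj (σ x) (σ y))
    (a : V → ℕ) (b : W → ℕ) (hab : ∀ x, b (σ x) = a x) (x : V) :
    stab H b (σ x) = stab G a x := by
  have hcard : Fintype.card W = Fintype.card V := Fintype.card_congr σ.symm
  unfold stab
  rw [hcard]
  exact refineIter_iso G H σ hadj a b hab _ x

/-- Agreement under `indivSet c S` is preserved when inserting a vertex distinct from both. -/
lemma indivSet_insert_of [Fintype V] {c : V → ℕ} {S : Finset V} {u x y : V}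
    (h : indivSet c ↑S x = indivSet c ↑S y) (hx : x ≠ u) (hy : y ≠ u) :
    indivSet c ↑(insert u S) x = indivSet c ↑(insert u S) y := by
  unfold indivSet at h ⊢
  have hx' : (x ∈ (↑(insert u S) : Set V)) ↔ (x ∈ (↑S : Set V)) := by
    simp [Finset.coe_insert, Set.mem_insert_iff, hx]
  have hy' : (y ∈ (↑(insert u S) : Set V)) ↔ (y ∈ (↑S : Set V)) := by
    simp [Finset.coe_insert, Set.mem_insert_iff, hy]
  split_ifs at h ⊢ with h1 h2 h3 h4 h5 h6 h7 h8 <;>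
    first
      | exact h
      | omega
      | (exfalso; tauto)

end MyHelpers

lemma tinhofer_aux {V W : Type} [Fintype V] [Fintype W]
    (G : SimpleGraph V) (H : SimpleGraph W) (c : V → ℕ) (d : W → ℕ) (k : ℕ)
    (hchar : ∀ S : Finset V, S.card ≤ k → ∀ u v : V,
      (stab G (indivSet c ↑S) u = stab G (indivSet c ↑S) v ↔
        ∃ σ : V ≃ V, IsAut G c σ ∧ (∀ x ∈ S, σ x = x) ∧ σ u = v)) :
    ∀ (us : List V) (vs : List W) (S : Finset V) (cG : V → ℕ) (dH : W → ℕ) (θ : V ≃ W),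
      (∀ x y, G.Adj x y ↔ H.Adj (θ x) (θ y)) →
      (∀ x, d (θ x) = c x) →
      (∀ x, dH (θ x) = cG x) →
      (∀ β : V ≃ V, IsAut G c β → (∀ x ∈ S, β x = x) → ∀ x, cG (β x) = cG x) →
      (∀ x y, cG x = cG y → indivSet c ↑S x = indivSet c ↑S y) →
      S.card + us.length ≤ k + 1 →
      ValidSeq G H cG dH us vs →
      ∃ σ : V ≃ W, (∀ x y, G.Adj x y ↔ H.Adj (σ x) (σ y)) ∧ (∀ v, d (σ v) = c v) ∧
        (∀ x ∈ S, σ x = θ x) ∧ List.Forall₂ (fun u w => σ u = w) us vs := by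
  intro us
  induction us with
  | nil =>
    intro vs S cG dH θ hadj hθc hθcur _ _ _ hvalid
    cases vs with
    | nil => exact ⟨θ, hadj, hθc, fun x _ => rfl, List.Forall₂.nil⟩
    | cons v vs => exact absurd hvalid (by simp [ValidSeq])
  | cons u us ih =>
    intro vs S cG dH θ hadj hθc hθcur hAut hPinv hcard hvalid
    cases vs with
    | nil => exact absurd hvalid (by simp [ValidSeq])
    | cons v vs =>
      obtain ⟨hcol, hvalid'⟩ := hvalid
      have hstabθ : ∀ x, stab H dH (θ x) = stab G cG x :=
        stab_iso G H θ hadj cG dH hθcur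
      set u' := θ.symm v with hu'
      have hθu' : θ u' = v := θ.apply_symm_apply v
      have h1 : stab G cG u = stab G cG u' := by
        rw [← hstabθ u', hθu']
        exact hcol
      have hS : S.card ≤ k := by
        simp only [List.length_cons] at hcard
        omega
      have h2 : stab G (indivSet c ↑S) u = stab G (indivSet c ↑S) u' :=
        refineIter_congr G cG (indivSet c ↑S) hPinv _ u u' h1
      obtain ⟨β, hβaut, hβfix, hβu⟩ := (hchar S hS u u').mp h2
      have hβcG : ∀ x, cG (β x) = cG x := hAut β hβaut hβfix
      have hβstab : ∀ x, stab G cG (β x) = stab G cG x :=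
        stab_iso G G β hβaut.1 cG cG hβcG
      set θ' : V ≃ W := β.trans θ with hθ'def
      have hθ'app : ∀ x, θ' x = θ (β x) := fun x => rfl
      have hadj' : ∀ x y, G.Adj x y ↔ H.Adj (θ' x) (θ' y) :=
        fun x y => (hβaut.1 x y).trans (hadj _ _)
      have hθ'c : ∀ x, d (θ' x) = c x := fun x => (hθc (β x)).trans (hβaut.2 x)
      have hbu : ∀ x, θ' x = v ↔ x = u := by
        intro x
        constructor
        · intro hc
          have hcc : θ (β x) = θ (β u) := by
            rw [← hθ'app x, hc, hβu, hθu']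
          exact β.injective (θ.injective hcc)
        · rintro rfl
          rw [hθ'app, hβu, hθu']
      have hθ'cur : ∀ x, indiv (stab H dH) v (θ' x) = indiv (stab G cG) u x := by
        intro x
        unfold indiv
        by_cases hx : x = u
        · rw [if_pos ((hbu x).mpr hx), if_pos hx]
        · rw [if_neg (fun hc => hx ((hbu x).mp hc)), if_neg hx, hθ'app, hstabθ (β x), hβstab]
      have hAut' : ∀ γ : V ≃ V, IsAut G c γ → (∀ x ∈ insert u S, γ x = x) →
          ∀ x, indiv (stab G cG) u (γ x) = indiv (stab G cG) u x := by
        intro γ hγ hfix x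
        have hfixS : ∀ x ∈ S, γ x = x := fun x hx => hfix x (Finset.mem_insert_of_mem hx)
        have hγcG : ∀ x, cG (γ x) = cG x := hAut γ hγ hfixS
        have hγstab : ∀ x, stab G cG (γ x) = stab G cG x :=
          stab_iso G G γ hγ.1 cG cG hγcG
        have hγu : γ u = u := hfix u (Finset.mem_insert_self u S)
        unfold indiv
        by_cases hx : x = u
        · rw [if_pos (by rw [hx, hγu]), if_pos hx]
        · rw [if_neg (fun hc => hx (γ.injective (hc.trans hγu.symm))), if_neg hx, hγstab]
      have hPinv' : ∀ x y, indiv (stab G cG) u x = indiv (stab G cG) u y →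
          indivSet c ↑(insert u S) x = indivSet c ↑(insert u S) y := by
        intro x y hxy
        unfold indiv at hxy
        by_cases hx : x = u
        · by_cases hy : y = u
          · rw [hx, hy]
          · rw [if_pos hx, if_neg hy] at hxy
            omega
        · by_cases hy : y = u
          · rw [if_neg hx, if_pos hy] at hxy
            omega
          · rw [if_neg hx, if_neg hy] at hxy
            have hstabeq : stab G cG x = stab G cG y := by omega
            have h3 : stab G (indivSet c ↑S) x = stab G (indivSet c ↑S) y :=
              refineIter_congr G cG (indivSet c ↑S) hPinv _ x y hstabeq
            have h4 : indivSet c ↑S x = indivSet c ↑S y :=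
              refineIter_base G (indivSet c ↑S) _ x y h3
            exact indivSet_insert_of h4 hx hy
      have hcard' : (insert u S).card + us.length ≤ k + 1 := by
        have := Finset.card_insert_le u S
        simp only [List.length_cons] at hcard
        omega
      obtain ⟨σ, hσ1, hσ2, hσS, hσF⟩ :=
        ih vs (insert u S) (indiv (stab G cG) u) (indiv (stab H dH) v) θ'
          hadj' hθ'c hθ'cur hAut' hPinv' hcard' hvalid'
      refine ⟨σ, hσ1, hσ2, ?_, ?_⟩
      · intro x hx
        rw [hσS x (Finset.mem_insert_of_mem hx), hθ'app, hβfix x hx]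
      · refine List.Forall₂.cons ?_ hσF
        rw [hσS u (Finset.mem_insert_self u S)]
        exact (hbu u).mpr rfl

/-- If `Orb(Aut_S(G)) = P_S(G)` for all `S` with `|S| ≤ k`, then for any `H ≅ G` and any
valid sequences of at most `k+1` individualized vertices produced by Tinhofer's algorithm,
there is an isomorphism from `G` to `H` mapping each individualized vertex of `G` to the
corresponding individualized vertex of `H`. -/
theorem exists_iso_mapping_individualized {V W : Type} [Fintype V] [Fintype W]
    (G : SimpleGraph V) (H : SimpleGraph W) (c : V → ℕ) (d : W → ℕ) (k : ℕ)
    (hchar : ∀ S : Finset V, S.card ≤ k → ∀ u v : V,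
      (stab G (indivSet c ↑S) u = stab G (indivSet c ↑S) v ↔
        ∃ σ : V ≃ V, IsAut G c σ ∧ (∀ x ∈ S, σ x = x) ∧ σ u = v))
    (hiso : IsoColored G H c d)
    (us : List V) (vs : List W)
    (hlen : us.length ≤ k + 1)
    (hvalid : ValidSeq G H c d us vs) :
    ∃ σ : V ≃ W, (∀ x y, G.Adj x y ↔ H.Adj (σ x) (σ y)) ∧ (∀ v, d (σ v) = c v) ∧
      List.Forall₂ (fun u w => σ u = w) us vs := by
  obtain ⟨θ, hθadj, hθc⟩ := hiso
  obtain ⟨σ, h1, h2, _, h4⟩ :=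
    tinhofer_aux G H c d k hchar us vs ∅ c d θ hθadj hθc hθc
      (fun β hβ _ x => hβ.2 x)
      (fun x y hxy => by unfold indivSet; simp [hxy])
      (by simpa using hlen) hvalid
  exact ⟨σ, h1, h2, h4⟩
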